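/- arXiv:2605.07120 — 2 statements merged into one kernel-verified Lean document; each statement's English description precedes it below -/
import Mathlib

section
/- Let G and M be symmetric positive semidefinite n×n matrices with dual minimizers c_G, c_M, and let k, m ∈ ℝ^n satisfy |k_i| ≤ κ² and |m_i| ≤ κ² for all i, for some κ > 0. Then |s_{k,G} − s_{m,M}| ≤ (κ²/(4λ²n))·‖G − M‖_op + (1/(λ√n))·‖k − m‖₂. -/
open Matrix Set

/-- Binary entropy potential, with Lean's convention `Real.log 0 = 0`. -/
noncomputable def phiEnt (c : ℝ) : ℝ := c * Real.log c + (1 - c) * Real.log (1 - c)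

/-- The dual objective
`D_K(c) = (1/n)·∑ᵢ φ(cᵢ) + (1/(2λn²))·(y⊙c)ᵀ K (y⊙c)`. -/
noncomputable def dualObj {n : ℕ} (lam : ℝ) (y : Fin n → ℝ)
    (K : Matrix (Fin n) (Fin n) ℝ) (c : Fin n → ℝ) : ℝ :=
  (1 / n) * ∑ i, phiEnt (c i) +
    (1 / (2 * lam * (n : ℝ) ^ 2)) * ((fun i => y i * c i) ⬝ᵥ (K *ᵥ fun i => y i * c i))

/-- The score `s_{k,G} = (1/(λn))·kᵀ(y⊙c)` of a test vector `k` at dual variable `c`. -/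
noncomputable def score {n : ℕ} (lam : ℝ) (y k c : Fin n → ℝ) : ℝ :=
  (1 / (lam * n)) * (k ⬝ᵥ fun i => y i * c i)

/-- Operator (spectral) norm of a real square matrix. -/
noncomputable def opNorm {n : ℕ} (A : Matrix (Fin n) (Fin n) ℝ) : ℝ :=
  ‖(Matrix.toEuclideanCLM (𝕜 := ℝ) A :
      EuclideanSpace ℝ (Fin n) →L[ℝ] EuclideanSpace ℝ (Fin n))‖

/-- Euclidean (ℓ²) norm of a vector. -/
noncomputable def e2norm {n : ℕ} (v : Fin n → ℝ) : ℝ := Real.sqrt (∑ i, (v i) ^ 2)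

lemma psi_hasDerivAt {x : ℝ} (hx0 : x ≠ 0) (hx1 : x ≠ 1) :
    HasDerivAt (fun c => phiEnt c - 2 * c ^ 2)
      (Real.log x - Real.log (1 - x) - 4 * x) x := by
  have h1 : HasDerivAt (fun c : ℝ => c * Real.log c) (Real.log x + 1) x :=
    Real.hasDerivAt_mul_log hx0
  have hinner : HasDerivAt (fun c : ℝ => 1 - c) (-1) x := by
    simpa using (hasDerivAt_id x).const_sub 1
  have h2 : HasDerivAt (fun c : ℝ => (1 - c) * Real.log (1 - c))
      ((Real.log (1 - x) + 1) * (-1)) x := by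
    have h1x : (1 : ℝ) - x ≠ 0 := by
      intro h; exact hx1 (by linarith [sub_eq_zero.mp h])
    exact (Real.hasDerivAt_mul_log h1x).comp x hinner
  have h3 : HasDerivAt (fun c : ℝ => 2 * c ^ 2) (4 * x) x := by
    have := (hasDerivAt_pow 2 x).const_mul (2 : ℝ)
    simpa [pow_one] using this.congr_deriv (by push_cast; ring)
  have := (h1.add h2).sub h3
  simp only [phiEnt]
  exact this.congr_deriv (by ring)

lemma g_hasDerivAt {x : ℝ} (hx0 : x ≠ 0) (hx1 : (1:ℝ) - x ≠ 0) :
    HasDerivAt (fun c : ℝ => Real.log c - Real.log (1 - c) - 4 * c)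
      (x⁻¹ + (1 - x)⁻¹ - 4) x := by
  have h1 : HasDerivAt (fun c : ℝ => Real.log c) x⁻¹ x := Real.hasDerivAt_log hx0
  have hinner : HasDerivAt (fun c : ℝ => 1 - c) (-1) x := by
    simpa using (hasDerivAt_id x).const_sub 1
  have h2 : HasDerivAt (fun c : ℝ => Real.log (1 - c)) ((1 - x)⁻¹ * (-1)) x :=
    (Real.hasDerivAt_log hx1).comp x hinner
  have h3 : HasDerivAt (fun c : ℝ => 4 * c) 4 x := by
    simpa using (hasDerivAt_id x).const_mul (4 : ℝ)
  have := (h1.sub h2).sub h3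
  exact this.congr_deriv (by ring)

lemma psi_convexOn : ConvexOn ℝ (Icc (0:ℝ) 1) (fun c => phiEnt c - 2 * c ^ 2) := by
  have hcont : Continuous fun c : ℝ => phiEnt c - 2 * c ^ 2 := by
    have h1 := Real.continuous_mul_log
    have h2 : Continuous fun c : ℝ => (1 - c) * Real.log (1 - c) :=
      h1.comp (continuous_const.sub continuous_id)
    simp only [phiEnt]
    exact (h1.add h2).sub (continuous_const.mul (continuous_pow 2))
  have hEq : EqOn (deriv fun c => phiEnt c - 2 * c ^ 2)
      (fun c : ℝ => Real.log c - Real.log (1 - c) - 4 * c) (Ioo (0:ℝ) 1) := by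
    intro x hx
    exact (psi_hasDerivAt (ne_of_gt hx.1) (ne_of_lt hx.2)).deriv
  refine convexOn_of_deriv2_nonneg (convex_Icc 0 1) hcont.continuousOn ?_ ?_ ?_
  · rw [interior_Icc]
    intro x hx
    exact (psi_hasDerivAt (ne_of_gt hx.1) (ne_of_lt hx.2)).differentiableAt.differentiableWithinAt
  · rw [interior_Icc]
    refine DifferentiableOn.congr ?_ hEq
    intro x hx
    have hx0 : x ≠ 0 := ne_of_gt hx.1
    have hx1 : (1:ℝ) - x ≠ 0 := by intro h; nlinarith [hx.2]
    exact (g_hasDerivAt hx0 hx1).differentiableAt.differentiableWithinAt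
  · rw [interior_Icc]
    intro x hx
    have hx0 : (0:ℝ) < x := hx.1
    have hx1 : (0:ℝ) < 1 - x := by linarith [hx.2]
    have hEq' : deriv (deriv fun c => phiEnt c - 2 * c ^ 2)
        x = x⁻¹ + (1 - x)⁻¹ - 4 := by
      have hev : (deriv fun c => phiEnt c - 2 * c ^ 2) =ᶠ[nhds x]
          (fun c : ℝ => Real.log c - Real.log (1 - c) - 4 * c) :=
        Filter.eventuallyEq_of_mem (isOpen_Ioo.mem_nhds hx) hEq
      rw [hev.deriv_eq]
      exact (g_hasDerivAt (ne_of_gt hx0) (ne_of_gt hx1)).deriv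
    show 0 ≤ deriv^[2] _ x
    rw [Function.iterate_succ, Function.iterate_one, Function.comp_apply, hEq']
    have key : x⁻¹ + (1 - x)⁻¹ - 4 = (1 - 2 * x) ^ 2 / (x * (1 - x)) := by
      field_simp
      ring
    rw [key]
    positivity

lemma phiEnt_strong {a b t s : ℝ} (ha : a ∈ Icc (0:ℝ) 1) (hb : b ∈ Icc (0:ℝ) 1)
    (ht : 0 ≤ t) (hs : 0 ≤ s) (hts : t + s = 1) :
    phiEnt (t * a + s * b) ≤ t * phiEnt a + s * phiEnt b - 2 * (t * s) * (a - b) ^ 2 := by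
  have h := psi_convexOn.2 ha hb ht hs hts
  simp only [smul_eq_mul] at h
  have hid : (t * a + s * b) ^ 2 = t * a ^ 2 + s * b ^ 2 - t * s * (a - b) ^ 2 := by
    have hs' : s = 1 - t := by linarith
    subst hs'
    ring
  nlinarith [h]




lemma quad_expand {n : ℕ} (K : Matrix (Fin n) (Fin n) ℝ) (t s : ℝ) (u v : Fin n → ℝ) :
    ((fun i => t * u i + s * v i) ⬝ᵥ (K *ᵥ fun i => t * u i + s * v i)) =
      t*t*(u ⬝ᵥ (K *ᵥ u)) + t*s*(u ⬝ᵥ (K *ᵥ v)) + s*t*(v ⬝ᵥ (K *ᵥ u)) + s*s*(v ⬝ᵥ (K *ᵥ v)) := by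
  have h : (fun i => t * u i + s * v i) = t • u + s • v := by
    funext i; simp [smul_eq_mul]
  rw [h]
  simp only [Matrix.mulVec_add, Matrix.mulVec_smul, add_dotProduct, dotProduct_add,
    smul_dotProduct, dotProduct_smul, smul_eq_mul]
  ring

lemma sub_expand {n : ℕ} (K : Matrix (Fin n) (Fin n) ℝ) (u v : Fin n → ℝ) :
    ((fun i => u i - v i) ⬝ᵥ (K *ᵥ fun i => u i - v i)) =
      (u ⬝ᵥ (K *ᵥ u)) - (u ⬝ᵥ (K *ᵥ v)) - (v ⬝ᵥ (K *ᵥ u)) + (v ⬝ᵥ (K *ᵥ v)) := by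
  have h : (fun i => u i - v i) = u - v := rfl
  rw [h]
  simp only [Matrix.mulVec_sub, sub_dotProduct, dotProduct_sub]
  ring

lemma psd_nonneg {n : ℕ} {K : Matrix (Fin n) (Fin n) ℝ} (hK : K.PosSemidef)
    (x : Fin n → ℝ) : 0 ≤ x ⬝ᵥ (K *ᵥ x) := by
  have := hK.dotProduct_mulVec_nonneg x
  simpa using this

lemma dual_strong {n : ℕ} (hn : 0 < n) (lam : ℝ) (hlam : 0 < lam) (y : Fin n → ℝ)
    (K : Matrix (Fin n) (Fin n) ℝ) (hK : K.PosSemidef)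
    {c d : Fin n → ℝ} (hc : ∀ i, c i ∈ Icc (0:ℝ) 1) (hd : ∀ i, d i ∈ Icc (0:ℝ) 1)
    {t s : ℝ} (ht : 0 ≤ t) (hs : 0 ≤ s) (hts : t + s = 1) :
    dualObj lam y K (fun i => t * c i + s * d i) ≤
      t * dualObj lam y K c + s * dualObj lam y K d
        - (2 / n) * (t * s) * ∑ i, (c i - d i) ^ 2 := by
  have hn' : (0:ℝ) < n := by exact_mod_cast hn
  set u : Fin n → ℝ := fun i => y i * c i with hu
  set v : Fin n → ℝ := fun i => y i * d i with hv
  have hα : (0:ℝ) ≤ 1 / (2 * lam * (n : ℝ) ^ 2) := by positivity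
  -- entropy part
  have hent : (1 / (n:ℝ)) * ∑ i, phiEnt (t * c i + s * d i) ≤
      t * ((1 / (n:ℝ)) * ∑ i, phiEnt (c i)) + s * ((1 / (n:ℝ)) * ∑ i, phiEnt (d i))
        - (2 / n) * (t * s) * ∑ i, (c i - d i) ^ 2 := by
    have hsum : ∑ i, phiEnt (t * c i + s * d i) ≤
        ∑ i, (t * phiEnt (c i) + s * phiEnt (d i) - 2 * (t * s) * (c i - d i) ^ 2) :=
      Finset.sum_le_sum fun i _ => phiEnt_strong (hc i) (hd i) ht hs hts
    rw [Finset.sum_sub_distrib, Finset.sum_add_distrib, ← Finset.mul_sum, ← Finset.mul_sum,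
      ← Finset.mul_sum] at hsum
    have := mul_le_mul_of_nonneg_left hsum (by positivity : (0:ℝ) ≤ 1 / (n:ℝ))
    calc (1 / (n:ℝ)) * ∑ i, phiEnt (t * c i + s * d i) ≤ _ := this
      _ = t * ((1 / (n:ℝ)) * ∑ i, phiEnt (c i)) + s * ((1 / (n:ℝ)) * ∑ i, phiEnt (d i))
          - (2 / n) * (t * s) * ∑ i, (c i - d i) ^ 2 := by ring
  -- quadratic part
  have hyq : (fun i => y i * (t * c i + s * d i)) = fun i => t * u i + s * v i := by
    funext i; simp only [hu, hv]; ring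
  have hquad : ((fun i => y i * (t * c i + s * d i)) ⬝ᵥ
        (K *ᵥ fun i => y i * (t * c i + s * d i))) ≤
      t * (u ⬝ᵥ (K *ᵥ u)) + s * (v ⬝ᵥ (K *ᵥ v)) := by
    rw [hyq, quad_expand]
    have hpsd : 0 ≤ ((fun i => u i - v i) ⬝ᵥ (K *ᵥ fun i => u i - v i)) := psd_nonneg hK _
    rw [sub_expand] at hpsd
    have hs' : s = 1 - t := by linarith
    subst hs'
    nlinarith [mul_nonneg (mul_nonneg ht hs) hpsd]
  have := mul_le_mul_of_nonneg_left hquad hα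
  simp only [dualObj]
  calc (1 / (n:ℝ)) * ∑ i, phiEnt (t * c i + s * d i)
      + (1 / (2 * lam * (n : ℝ) ^ 2)) * ((fun i => y i * (t * c i + s * d i)) ⬝ᵥ
        (K *ᵥ fun i => y i * (t * c i + s * d i)))
      ≤ (t * ((1 / (n:ℝ)) * ∑ i, phiEnt (c i)) + s * ((1 / (n:ℝ)) * ∑ i, phiEnt (d i))
        - (2 / n) * (t * s) * ∑ i, (c i - d i) ^ 2)
      + (1 / (2 * lam * (n : ℝ) ^ 2)) * (t * (u ⬝ᵥ (K *ᵥ u)) + s * (v ⬝ᵥ (K *ᵥ v))) :=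
        add_le_add hent this
    _ = _ := by ring

lemma three_point {n : ℕ} (hn : 0 < n) (lam : ℝ) (hlam : 0 < lam) (y : Fin n → ℝ)
    (K : Matrix (Fin n) (Fin n) ℝ) (hK : K.PosSemidef)
    {cs : Fin n → ℝ} (hcs : ∀ i, cs i ∈ Icc (0:ℝ) 1)
    (hmin : IsMinOn (dualObj lam y K) {c | ∀ i, c i ∈ Icc (0:ℝ) 1} cs)
    {c : Fin n → ℝ} (hc : ∀ i, c i ∈ Icc (0:ℝ) 1) :
    dualObj lam y K cs + (2 / n) * ∑ i, (c i - cs i) ^ 2 ≤ dualObj lam y K c := by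
  have hn' : (0:ℝ) < n := by exact_mod_cast hn
  set S := ∑ i, (c i - cs i) ^ 2 with hS
  have key : ∀ t : ℝ, t ∈ Ioc (0:ℝ) 1 →
      dualObj lam y K cs + (2 / n) * (1 - t) * S ≤ dualObj lam y K c := by
    intro t ht
    have ht0 : 0 < t := ht.1
    have ht1 : t ≤ 1 := ht.2
    have hs0 : 0 ≤ 1 - t := by linarith
    have hbox : (fun i => t * c i + (1 - t) * cs i) ∈ {c : Fin n → ℝ | ∀ i, c i ∈ Icc (0:ℝ) 1} := by
      intro i
      obtain ⟨h1, h2⟩ := hc i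
      obtain ⟨h3, h4⟩ := hcs i
      show t * c i + (1 - t) * cs i ∈ Icc (0:ℝ) 1
      rw [Set.mem_Icc]
      constructor
      · positivity
      · nlinarith
    have hmin' := hmin hbox
    have hsc := dual_strong hn lam hlam y K hK hc hcs (le_of_lt ht0) hs0 (by ring)
    have hsum : ∑ i, (c i - cs i) ^ 2 = S := rfl
    rw [hsum] at hsc
    simp only [IsMinOn, IsMinFilter] at hmin'
    -- hmin' : dualObj lam y K cs ≤ dualObj lam y K (fun i => t * c i + (1-t) * cs i)
    have h2 : dualObj lam y K cs ≤ t * dualObj lam y K c + (1 - t) * dualObj lam y K cs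
        - (2 / n) * (t * (1 - t)) * S := le_trans hmin' hsc
    -- divide by t
    nlinarith [h2, ht0]
  have hlim : Filter.Tendsto (fun t : ℝ => dualObj lam y K cs + (2 / n) * (1 - t) * S)
      (nhdsWithin 0 (Ioi 0)) (nhds (dualObj lam y K cs + (2 / n) * (1 - 0) * S)) := by
    apply Filter.Tendsto.mono_left _ nhdsWithin_le_nhds
    exact (Continuous.tendsto (by continuity) 0)
  have hev : ∀ᶠ t in nhdsWithin (0:ℝ) (Ioi 0),
      dualObj lam y K cs + (2 / n) * (1 - t) * S ≤ dualObj lam y K c := by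
    filter_upwards [Ioc_mem_nhdsGT (by norm_num : (0:ℝ) < 1)]
      with t ht using key t ht
  have := le_of_tendsto hlim hev
  simpa using this

lemma e2norm_eq {n : ℕ} (v : Fin n → ℝ) :
    e2norm v = ‖((WithLp.equiv 2 (Fin n → ℝ)).symm v : EuclideanSpace ℝ (Fin n))‖ := by
  rw [EuclideanSpace.norm_eq, e2norm]
  congr 1
  apply Finset.sum_congr rfl
  intro i _
  simp only [WithLp.equiv_symm_apply, Real.norm_eq_abs, sq_abs]

lemma abs_dot_mulVec_le {n : ℕ} (A : Matrix (Fin n) (Fin n) ℝ) (w z : Fin n → ℝ) :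
    |w ⬝ᵥ (A *ᵥ z)| ≤ opNorm A * e2norm w * e2norm z := by
  set W : EuclideanSpace ℝ (Fin n) := (WithLp.equiv 2 _).symm w with hW
  set Z : EuclideanSpace ℝ (Fin n) := (WithLp.equiv 2 _).symm z with hZ
  set T := (Matrix.toEuclideanCLM (𝕜 := ℝ) A :
      EuclideanSpace ℝ (Fin n) →L[ℝ] EuclideanSpace ℝ (Fin n)) with hT
  have hAZ : T Z = (WithLp.equiv 2 _).symm (A *ᵥ z) := Matrix.toEuclideanCLM_toLp A z
  have hinner : (inner ℝ W (T Z) : ℝ) = w ⬝ᵥ (A *ᵥ z) := by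
    rw [hAZ]
    simp only [PiLp.inner_apply, RCLike.inner_apply, conj_trivial, hW,
      WithLp.equiv_symm_apply, PiLp.toLp_apply, dotProduct]
    exact Finset.sum_congr rfl fun i _ => mul_comm _ _
  have h1 : |(inner ℝ W (T Z) : ℝ)| ≤ ‖W‖ * ‖T Z‖ := abs_real_inner_le_norm W (T Z)
  have h2 : ‖T Z‖ ≤ ‖T‖ * ‖Z‖ := T.le_opNorm Z
  have h3 : |w ⬝ᵥ (A *ᵥ z)| ≤ ‖W‖ * (‖T‖ * ‖Z‖) := by
    rw [← hinner]
    exact le_trans h1 (mul_le_mul_of_nonneg_left h2 (norm_nonneg W))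
  rw [e2norm_eq w, e2norm_eq z]
  calc |w ⬝ᵥ (A *ᵥ z)| ≤ ‖W‖ * (‖T‖ * ‖Z‖) := h3
    _ = opNorm A * ‖W‖ * ‖Z‖ := by rw [opNorm, ← hT]; ring

/-- Deterministic score perturbation bound:
`|s_{k,G} − s_{m,M}| ≤ (κ²/(4λ²n))·‖G − M‖_op + (1/(λ√n))·‖k − m‖₂`. -/
theorem score_perturbation
    {n : ℕ} (hn : 0 < n)
    (y : Fin n → ℝ) (hy : ∀ i, y i = 1 ∨ y i = -1)
    (lam : ℝ) (hlam : 0 < lam)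
    (G M : Matrix (Fin n) (Fin n) ℝ) (hG : G.PosSemidef) (hM : M.PosSemidef)
    (cG cM : Fin n → ℝ)
    (hcG : (∀ i, cG i ∈ Icc (0:ℝ) 1) ∧
      IsMinOn (dualObj lam y G) {c | ∀ i, c i ∈ Icc (0:ℝ) 1} cG)
    (hcM : (∀ i, cM i ∈ Icc (0:ℝ) 1) ∧
      IsMinOn (dualObj lam y M) {c | ∀ i, c i ∈ Icc (0:ℝ) 1} cM)
    (k m : Fin n → ℝ) (κ : ℝ) (hκ : 0 < κ)
    (hk : ∀ i, |k i| ≤ κ ^ 2) (hm : ∀ i, |m i| ≤ κ ^ 2) :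
    |score lam y k cG - score lam y m cM| ≤
      (κ ^ 2 / (4 * lam ^ 2 * n)) * opNorm (G - M) +
        (1 / (lam * Real.sqrt n)) * e2norm (k - m) := by
  have hn' : (0:ℝ) < n := by exact_mod_cast hn
  set r := Real.sqrt (n : ℝ) with hrdef
  have hr : 0 < r := Real.sqrt_pos.mpr hn'
  have hr2 : r * r = (n:ℝ) := Real.mul_self_sqrt (le_of_lt hn')
  set uG : Fin n → ℝ := fun i => y i * cG i with huG
  set uM : Fin n → ℝ := fun i => y i * cM i with huM
  set dd : Fin n → ℝ := fun i => uM i - uG i with hdd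
  set S := ∑ i, (cM i - cG i) ^ 2 with hSdef
  have hS0 : 0 ≤ S := Finset.sum_nonneg fun i _ => sq_nonneg _
  have hy2 : ∀ i, y i * y i = 1 := by
    intro i; rcases hy i with h | h <;> rw [h] <;> norm_num
  have hddS : ∑ i, dd i ^ 2 = S := by
    apply Finset.sum_congr rfl
    intro i _
    simp only [hdd, huM, huG]
    nlinarith [hy2 i]
  have he2dd : e2norm dd = Real.sqrt S := by rw [e2norm, hddS]
  have huMsq : ∀ (c : Fin n → ℝ), (∀ i, c i ∈ Icc (0:ℝ) 1) →
      ∑ i, (y i * c i) ^ 2 ≤ (n:ℝ) := by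
    intro c hc
    calc ∑ i, (y i * c i) ^ 2 ≤ ∑ _i : Fin n, (1:ℝ) := by
          apply Finset.sum_le_sum
          intro i _
          obtain ⟨h1, h2⟩ := hc i
          rcases hy i with h | h <;> rw [h] <;> nlinarith
      _ = (n:ℝ) := by simp
  have he2uM : e2norm uM ≤ r := by
    rw [e2norm, hrdef]
    exact Real.sqrt_le_sqrt (huMsq cM hcM.1)
  have he2uG : e2norm uG ≤ r := by
    rw [e2norm, hrdef]
    exact Real.sqrt_le_sqrt (huMsq cG hcG.1)
  set A := G - M with hA
  set opN := opNorm A with hopN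
  have hopN0 : 0 ≤ opN := norm_nonneg _
  have hdiff : ∀ c : Fin n → ℝ, dualObj lam y G c - dualObj lam y M c =
      (1/(2*lam*(n:ℝ)^2)) * ((fun i => y i * c i) ⬝ᵥ (A *ᵥ fun i => y i * c i)) := by
    intro c
    simp only [dualObj, hA, Matrix.sub_mulVec, dotProduct_sub]
    ring
  have h1 := three_point hn lam hlam y G hG hcG.1 hcG.2 hcM.1
  have h2 := three_point hn lam hlam y M hM hcM.1 hcM.2 hcG.1
  have hsym : ∑ i, (cG i - cM i) ^ 2 = S := by
    rw [hSdef]; apply Finset.sum_congr rfl; intro i _; ring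
  rw [hsym] at h2
  rw [show ∑ i, (cM i - cG i) ^ 2 = S from rfl] at h1
  have hXM := hdiff cM
  have hXG := hdiff cG
  rw [← huM] at hXM
  rw [← huG] at hXG
  set XM := uM ⬝ᵥ (A *ᵥ uM) with hXMdef
  set XG := uG ⬝ᵥ (A *ᵥ uG) with hXGdef
  have hsum : (4/(n:ℝ)) * S ≤ (1/(2*lam*(n:ℝ)^2)) * (XM - XG) := by
    rw [mul_sub]
    have e3 : (1/(2*lam*(n:ℝ)^2)) * XM - (1/(2*lam*(n:ℝ)^2)) * XG =
        (dualObj lam y G cM - dualObj lam y M cM) -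
          (dualObj lam y G cG - dualObj lam y M cG) := by rw [hXM, hXG]
    rw [e3]
    have e4 : (4:ℝ)/(n:ℝ) * S = 2/(n:ℝ) * S + 2/(n:ℝ) * S := by ring
    rw [e4]
    linarith [h1, h2]
  have hexp : XM - XG = dd ⬝ᵥ (A *ᵥ uM) + uG ⬝ᵥ (A *ᵥ dd) := by
    have hdd' : dd = uM - uG := rfl
    rw [hXMdef, hXGdef, hdd', sub_dotProduct, Matrix.mulVec_sub, dotProduct_sub]
    ring
  have hb1 : |dd ⬝ᵥ (A *ᵥ uM)| ≤ opN * Real.sqrt S * r := by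
    calc |dd ⬝ᵥ (A *ᵥ uM)| ≤ opN * e2norm dd * e2norm uM := abs_dot_mulVec_le A dd uM
      _ ≤ opN * Real.sqrt S * r := by
          rw [he2dd]
          apply mul_le_mul_of_nonneg_left he2uM
          positivity
  have hb2 : |uG ⬝ᵥ (A *ᵥ dd)| ≤ opN * Real.sqrt S * r := by
    calc |uG ⬝ᵥ (A *ᵥ dd)| ≤ opN * e2norm uG * e2norm dd := abs_dot_mulVec_le A uG dd
      _ ≤ opN * Real.sqrt S * r := by
          rw [he2dd]
          calc opN * e2norm uG * Real.sqrt S ≤ opN * r * Real.sqrt S := by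
                apply mul_le_mul_of_nonneg_right (mul_le_mul_of_nonneg_left he2uG hopN0)
                exact Real.sqrt_nonneg S
            _ = opN * Real.sqrt S * r := by ring
  have hX : XM - XG ≤ 2 * opN * Real.sqrt S * r := by
    calc XM - XG = dd ⬝ᵥ (A *ᵥ uM) + uG ⬝ᵥ (A *ᵥ dd) := hexp
      _ ≤ |dd ⬝ᵥ (A *ᵥ uM)| + |uG ⬝ᵥ (A *ᵥ dd)| := add_le_add (le_abs_self _) (le_abs_self _)
      _ ≤ opN * Real.sqrt S * r + opN * Real.sqrt S * r := add_le_add hb1 hb2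
      _ = 2 * opN * Real.sqrt S * r := by ring
  have hkey : Real.sqrt S ≤ opN / (4 * lam * r) := by
    have hchain : (4/(n:ℝ)) * S ≤ (1/(2*lam*(n:ℝ)^2)) * (2 * opN * Real.sqrt S * r) :=
      le_trans hsum (mul_le_mul_of_nonneg_left hX (by positivity))
    have hSeq : S = Real.sqrt S * Real.sqrt S := (Real.mul_self_sqrt hS0).symm
    by_cases hz : Real.sqrt S = 0
    · rw [hz]; positivity
    · have hpos : 0 < Real.sqrt S := (Real.sqrt_nonneg S).lt_of_ne (Ne.symm hz)
      have h6' : ((4/(n:ℝ)) * Real.sqrt S) * Real.sqrt S ≤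
          ((1/(2*lam*(n:ℝ)^2)) * (2 * opN * r)) * Real.sqrt S := by
        calc ((4/(n:ℝ)) * Real.sqrt S) * Real.sqrt S = (4/(n:ℝ)) * S := by
              conv_rhs => rw [← Real.mul_self_sqrt hS0]
              ring
          _ ≤ (1/(2*lam*(n:ℝ)^2)) * (2 * opN * Real.sqrt S * r) := hchain
          _ = ((1/(2*lam*(n:ℝ)^2)) * (2 * opN * r)) * Real.sqrt S := by ring
      have h8 : (4/(n:ℝ)) * Real.sqrt S ≤ (1/(2*lam*(n:ℝ)^2)) * (2 * opN * r) :=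
        le_of_mul_le_mul_right h6' hpos
      have haux : ∀ x : ℝ, x = ((n:ℝ)/4) * ((4/(n:ℝ)) * x) := by
        intro x
        field_simp
      have h9 : Real.sqrt S ≤ ((n:ℝ)/4) * ((1/(2*lam*(n:ℝ)^2)) * (2 * opN * r)) := by
        calc Real.sqrt S = ((n:ℝ)/4) * ((4/(n:ℝ)) * Real.sqrt S) := haux _
          _ ≤ _ := mul_le_mul_of_nonneg_left h8 (by positivity)
      have h10 : ((n:ℝ)/4) * ((1/(2*lam*(n:ℝ)^2)) * (2 * opN * r)) = opN / (4 * lam * r) := by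
        rw [← hr2]
        field_simp
      rw [h10] at h9
      exact h9
  have hscore : score lam y k cG - score lam y m cM =
      (1 / (lam * n)) * (-(k ⬝ᵥ dd) + ((k - m) ⬝ᵥ uM)) := by
    simp only [score, ← huG, ← huM]
    have hdd' : dd = uM - uG := rfl
    rw [hdd', dotProduct_sub, sub_dotProduct]
    ring
  have habs_sum : ∑ i, |dd i| ≤ Real.sqrt S * r := by
    have hcs := Finset.sum_mul_sq_le_sq_mul_sq Finset.univ (fun i => |dd i|) (fun _ => (1:ℝ))
    simp only [mul_one, one_pow, sq_abs, Finset.sum_const, Finset.card_univ,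
      Fintype.card_fin, nsmul_eq_mul] at hcs
    rw [hddS] at hcs
    have hnn : 0 ≤ ∑ i, |dd i| := Finset.sum_nonneg fun i _ => abs_nonneg _
    have h := Real.sqrt_le_sqrt hcs
    rwa [Real.sqrt_sq hnn, Real.sqrt_mul hS0, ← hrdef] at h
  have hkdd : |k ⬝ᵥ dd| ≤ κ^2 * (Real.sqrt S * r) := by
    calc |k ⬝ᵥ dd| ≤ ∑ i, |k i * dd i| := Finset.abs_sum_le_sum_abs _ _
      _ ≤ ∑ i, κ^2 * |dd i| := by
          apply Finset.sum_le_sum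
          intro i _
          rw [abs_mul]
          exact mul_le_mul_of_nonneg_right (hk i) (abs_nonneg _)
      _ = κ^2 * ∑ i, |dd i| := by rw [Finset.mul_sum]
      _ ≤ κ^2 * (Real.sqrt S * r) := mul_le_mul_of_nonneg_left habs_sum (by positivity)
  have hkm : |(k - m) ⬝ᵥ uM| ≤ e2norm (k - m) * r := by
    have hcs := Finset.sum_mul_sq_le_sq_mul_sq Finset.univ (fun i => (k - m) i) uM
    have habs : |(k - m) ⬝ᵥ uM| = Real.sqrt (((k - m) ⬝ᵥ uM)^2) := (Real.sqrt_sq_eq_abs _).symm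
    rw [habs]
    calc Real.sqrt (((k - m) ⬝ᵥ uM)^2) ≤
        Real.sqrt ((∑ i, ((k - m) i)^2) * ∑ i, (uM i)^2) := Real.sqrt_le_sqrt hcs
      _ = Real.sqrt (∑ i, ((k - m) i)^2) * Real.sqrt (∑ i, (uM i)^2) := by
          rw [Real.sqrt_mul (Finset.sum_nonneg fun i _ => sq_nonneg _)]
      _ ≤ e2norm (k - m) * r := by
          rw [e2norm, hrdef]
          exact mul_le_mul_of_nonneg_left (Real.sqrt_le_sqrt (huMsq cM hcM.1))
            (Real.sqrt_nonneg _)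
  have hfin : |score lam y k cG - score lam y m cM| ≤
      (1 / (lam * n)) * (κ^2 * (Real.sqrt S * r) + e2norm (k - m) * r) := by
    rw [hscore, abs_mul, abs_of_pos (show (0:ℝ) < 1 / (lam * n) by positivity)]
    apply mul_le_mul_of_nonneg_left _ (by positivity : (0:ℝ) ≤ 1 / (lam * n))
    calc |(-(k ⬝ᵥ dd) + ((k - m) ⬝ᵥ uM))| ≤ |(-(k ⬝ᵥ dd))| + |(k - m) ⬝ᵥ uM| := abs_add_le _ _
      _ = |k ⬝ᵥ dd| + |(k - m) ⬝ᵥ uM| := by rw [abs_neg]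
      _ ≤ κ^2 * (Real.sqrt S * r) + e2norm (k - m) * r := add_le_add hkdd hkm
  calc |score lam y k cG - score lam y m cM|
      ≤ (1 / (lam * n)) * (κ^2 * (Real.sqrt S * r) + e2norm (k - m) * r) := hfin
    _ ≤ (1 / (lam * n)) * (κ^2 * ((opN / (4 * lam * r)) * r) + e2norm (k - m) * r) := by
        apply mul_le_mul_of_nonneg_left _ (by positivity : (0:ℝ) ≤ 1 / (lam * n))
        apply add_le_add_left
        apply mul_le_mul_of_nonneg_left _ (by positivity : (0:ℝ) ≤ κ^2)
        exact mul_le_mul_of_nonneg_right hkey (le_of_lt hr)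
    _ = (κ ^ 2 / (4 * lam ^ 2 * n)) * opN + (1 / (lam * r)) * e2norm (k - m) := by
        rw [← hr2]
        field_simp
end

section
/- Let N ∈ ℝ^{r×r} be symmetric positive semidefinite, ε ∈ {−1,+1}^r, θ ∈ (0,1)^r, y_i = ε_{τ(i)}, Y = diag(y), Y_r = diag(ε), M = P N Pᵀ, and C_M = (4/n)·I + (1/(λn²))·Y M Y. Define 𝒜 = 4·I + (1/λ)·Y_r Q^{1/2} N Q^{1/2} Y_r and R = Q^{1/2} 𝒜^{−1} Q^{1/2}. Fix a ∈ {1,…,r}, set m_a = (N_{a,τ(i)})_{i=1}^n, s_a = Y_r (N_{a1}, …, N_{ar})ᵀ, and a_m = (1/(λn))·Y m_a. Let Δ ∈ ℝ^{n×n} be arbitrary with color-pair block averages Δ̄_{bc} = (1/(n_b n_c))·∑_{i: τ(i)=b} ∑_{j: τ(j)=c} Δ_{ij}, set β = ε ⊙ θ, g_Δ = Y_r Δ̄ Q β, b = (1/(λn²))·Y Δ Y (Pθ), b_∥ = P·((1/(λn))·g_Δ), and b_⊥ = b − b_∥. Then: a_mᵀ C_M^{−1} a_m = (1/λ²)·s_aᵀ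 R s_a; a_mᵀ C_M^{−1} b = (1/λ²)·s_aᵀ R g_Δ; and bᵀ C_M^{−1} b = (1/λ²)·g_Δᵀ R g_Δ + (n/4)·‖b_⊥‖₂². -/
open Matrix Set Finset

/-- Size of the template block `b` under the assignment `τ`. -/
def blockSize {n r : ℕ} (τ : Fin n → Fin r) (b : Fin r) : ℕ :=
  (univ.filter (fun i => τ i = b)).card

/-- Color-pair block averages `Ā_{bc} = (1/(n_b n_c))·∑_{τ(i)=b} ∑_{τ(j)=c} A_{ij}`. -/
noncomputable def blockAvgM {n r : ℕ} (τ : Fin n → Fin r)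
    (A : Matrix (Fin n) (Fin n) ℝ) : Matrix (Fin r) (Fin r) ℝ :=
  Matrix.of fun b c =>
    (1 / ((blockSize τ b : ℝ) * (blockSize τ c : ℝ))) *
      ∑ i ∈ univ.filter (fun i => τ i = b), ∑ j ∈ univ.filter (fun j => τ j = c), A i j

private lemma realCT {m k : Type*} (A : Matrix m k ℝ) : Aᴴ = Aᵀ := by
  ext i j; simp [Matrix.conjTranspose_apply]

private lemma psdSmul {m : Type*} [Fintype m] {A : Matrix m m ℝ} (hA : A.PosSemidef)
    {c : ℝ} (hc : 0 ≤ c) : (c • A).PosSemidef := by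
  refine ⟨?_, fun x => ?_⟩
  · have h := hA.1
    simp only [Matrix.IsHermitian] at h ⊢
    rw [Matrix.conjTranspose_smul, h]
    simp
  · exact (hA.smul hc).2 x

private lemma pdAux {m : Type*} [Fintype m] [DecidableEq m] {A : Matrix m m ℝ}
    (hA : A.PosSemidef) {c d : ℝ} (hc : 0 < c) (hd : 0 ≤ d) :
    (c • (1 : Matrix m m ℝ) + d • A).PosDef := by
  have h1 : (c • (1 : Matrix m m ℝ)).PosDef := by
    rw [Matrix.smul_one_eq_diagonal]
    exact Matrix.posDef_diagonal_iff.mpr fun _ => hc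
  exact h1.add_posSemidef (psdSmul hA hd)

private lemma symdot {m : Type*} [Fintype m] {S : Matrix m m ℝ} (hS : Sᵀ = S)
    (x w : m → ℝ) : (S *ᵥ x) ⬝ᵥ w = x ⬝ᵥ (S *ᵥ w) := by
  rw [dotProduct_comm, Matrix.dotProduct_mulVec, ← Matrix.mulVec_transpose, hS,
    dotProduct_comm]

/-- Curvature template identities: the `C_M⁻¹`-quadratic and bilinear forms of the
ideal test representer and of the collision perturbation reduce to the template-level
matrix `R = Q^{1/2} 𝒜⁻¹ Q^{1/2}`, with Pythagorean residual `(n/4)·‖b_⊥‖₂²`. -/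
theorem curvature_template_identities
    {n r : ℕ} (hn : 0 < n) (hr : 0 < r) (lam : ℝ) (hlam : 0 < lam)
    (τ : Fin n → Fin r) (hτ : Function.Surjective τ)
    (P : Matrix (Fin n) (Fin r) ℝ)
    (hP : ∀ i b, P i b = if τ i = b then 1 else 0)
    (phat : Fin r → ℝ) (hphat : ∀ b, phat b = (blockSize τ b : ℝ) / n)
    (Q : Matrix (Fin r) (Fin r) ℝ) (hQ : Q = Matrix.diagonal phat)
    (Qh : Matrix (Fin r) (Fin r) ℝ)
    (hQh : Qh = Matrix.diagonal (fun b => Real.sqrt (phat b)))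
    (N : Matrix (Fin r) (Fin r) ℝ) (hN : N.PosSemidef)
    (ε : Fin r → ℝ) (hε : ∀ a, ε a = 1 ∨ ε a = -1)
    (θ : Fin r → ℝ) (hθ : ∀ b, θ b ∈ Ioo (0:ℝ) 1)
    (y : Fin n → ℝ) (hy : ∀ i, y i = ε (τ i))
    (Y : Matrix (Fin n) (Fin n) ℝ) (hY : Y = Matrix.diagonal y)
    (Yr : Matrix (Fin r) (Fin r) ℝ) (hYr : Yr = Matrix.diagonal ε)
    (M : Matrix (Fin n) (Fin n) ℝ) (hM : M = P * N * Pᵀ)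
    (CM : Matrix (Fin n) (Fin n) ℝ)
    (hCM : CM = ((4 : ℝ) / n) • (1 : Matrix (Fin n) (Fin n) ℝ) +
      (1 / (lam * (n : ℝ) ^ 2)) • (Y * M * Y))
    (calA : Matrix (Fin r) (Fin r) ℝ)
    (hcalA : calA = (4 : ℝ) • (1 : Matrix (Fin r) (Fin r) ℝ) +
      (1 / lam) • (Yr * Qh * N * Qh * Yr))
    (R : Matrix (Fin r) (Fin r) ℝ) (hR : R = Qh * calA⁻¹ * Qh)
    (a : Fin r)
    (ma : Fin n → ℝ) (hma : ∀ i, ma i = N a (τ i))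
    (sa : Fin r → ℝ) (hsa : sa = Yr *ᵥ fun b => N a b)
    (am : Fin n → ℝ) (ham : am = (1 / (lam * n)) • (Y *ᵥ ma))
    (Δ : Matrix (Fin n) (Fin n) ℝ)
    (β : Fin r → ℝ) (hβ : ∀ b, β b = ε b * θ b)
    (gΔ : Fin r → ℝ) (hgΔ : gΔ = Yr *ᵥ (blockAvgM τ Δ *ᵥ (Q *ᵥ β)))
    (b : Fin n → ℝ)
    (hb : b = (1 / (lam * (n : ℝ) ^ 2)) • (Y *ᵥ (Δ *ᵥ (Y *ᵥ (P *ᵥ θ)))))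
    (bpar : Fin n → ℝ) (hbpar : bpar = P *ᵥ ((1 / (lam * n)) • gΔ))
    (bperp : Fin n → ℝ) (hbperp : bperp = b - bpar) :
    am ⬝ᵥ (CM⁻¹ *ᵥ am) = (1 / lam ^ 2) * (sa ⬝ᵥ (R *ᵥ sa)) ∧
    am ⬝ᵥ (CM⁻¹ *ᵥ b) = (1 / lam ^ 2) * (sa ⬝ᵥ (R *ᵥ gΔ)) ∧
    b ⬝ᵥ (CM⁻¹ *ᵥ b) =
      (1 / lam ^ 2) * (gΔ ⬝ᵥ (R *ᵥ gΔ)) + ((n : ℝ) / 4) * ∑ i, (bperp i) ^ 2 := by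
  have hn0 : (0:ℝ) < n := by exact_mod_cast hn
  have hnne : (n:ℝ) ≠ 0 := hn0.ne'
  have hlamne : lam ≠ 0 := hlam.ne'
  set nb : Fin r → ℝ := fun c => (blockSize τ c : ℝ) with hnbdef
  have hnb : ∀ c, 0 < nb c := by
    intro c
    have h : 0 < blockSize τ c := by
      obtain ⟨i, hi⟩ := hτ c
      exact Finset.card_pos.mpr ⟨i, by simp [hi]⟩
    simp only [hnbdef]
    exact_mod_cast h
  have hphat_pos : ∀ c, 0 < phat c := fun c => by
    rw [hphat]; exact div_pos (hnb c) hn0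
  -- matrices
  set Dn : Matrix (Fin r) (Fin r) ℝ := Matrix.diagonal nb with hDn
  set Ab : Matrix (Fin r) (Fin r) ℝ := blockAvgM τ Δ with hAb
  set W : Matrix (Fin n) (Fin r) ℝ := Y * P with hW
  set D : Matrix (Fin r) (Fin r) ℝ :=
    (4:ℝ) • (1 : Matrix (Fin r) (Fin r) ℝ) + (1/lam) • (Qh * N * Qh) with hD
  set B : Matrix (Fin r) (Fin r) ℝ :=
    (4:ℝ) • (1 : Matrix (Fin r) (Fin r) ℝ) + (1/lam) • (N * Q) with hB
  set Qih : Matrix (Fin r) (Fin r) ℝ :=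
    Matrix.diagonal (fun c => (Real.sqrt (phat c))⁻¹) with hQih
  set Binv : Matrix (Fin r) (Fin r) ℝ := Qih * D⁻¹ * Qh with hBinv
  -- basic structural identities
  have hsq_pos : ∀ c, 0 < Real.sqrt (phat c) := fun c => Real.sqrt_pos.mpr (hphat_pos c)
  have hQhQh : Qh * Qh = Q := by
    rw [hQh, hQ, Matrix.diagonal_mul_diagonal]
    exact congrArg Matrix.diagonal (funext fun c => Real.mul_self_sqrt (hphat_pos c).le)
  have hQihQh : Qih * Qh = 1 := by
    rw [hQih, hQh, Matrix.diagonal_mul_diagonal, ← Matrix.diagonal_one]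
    exact congrArg Matrix.diagonal (funext fun c => inv_mul_cancel₀ (hsq_pos c).ne')
  have hQhQih : Qh * Qih = 1 := by
    rw [hQih, hQh, Matrix.diagonal_mul_diagonal, ← Matrix.diagonal_one]
    exact congrArg Matrix.diagonal (funext fun c => mul_inv_cancel₀ (hsq_pos c).ne')
  have hQQih : Q * Qih = Qh := by
    rw [hQih, hQ, hQh, Matrix.diagonal_mul_diagonal]
    refine congrArg Matrix.diagonal (funext fun c => ?_)
    rw [← Real.mul_self_sqrt (hphat_pos c).le]
    rw [Real.sqrt_mul_self (Real.sqrt_nonneg _), mul_assoc, mul_inv_cancel₀ (hsq_pos c).ne', mul_one]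
  have hYr2 : Yr * Yr = 1 := by
    rw [hYr, Matrix.diagonal_mul_diagonal, ← Matrix.diagonal_one]
    refine congrArg Matrix.diagonal (funext fun c => ?_)
    rcases hε c with h | h <;> simp [h]
  have hY2 : Y * Y = 1 := by
    rw [hY, Matrix.diagonal_mul_diagonal, ← Matrix.diagonal_one]
    refine congrArg Matrix.diagonal (funext fun i => ?_)
    rcases hε (τ i) with h | h <;> simp [hy, h]
  have hYP : Y * P = P * Yr := by
    ext i c
    rw [hY, hYr, Matrix.diagonal_mul, Matrix.mul_diagonal, hP, hy]
    by_cases h : τ i = c <;> simp [h]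
  have hYrQh : Yr * Qh = Qh * Yr := by
    rw [hYr, hQh, Matrix.diagonal_mul_diagonal, Matrix.diagonal_mul_diagonal]
    exact congrArg Matrix.diagonal (funext fun c => mul_comm _ _)
  have hPtP : Pᵀ * P = Dn := by
    ext bb c
    rw [Matrix.mul_apply]
    simp only [Matrix.transpose_apply, hP]
    by_cases hbc : bb = c
    · subst hbc
      have h : ∀ i : Fin n, (if τ i = bb then (1:ℝ) else 0) * (if τ i = bb then 1 else 0)
          = if τ i = bb then (1:ℝ) else 0 := fun i => by by_cases h : τ i = bb <;> simp [h]
      simp only [h]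
      rw [Finset.sum_boole]
      simp [hDn, Matrix.diagonal, hnbdef, blockSize]
    · have h : ∀ i : Fin n, (if τ i = bb then (1:ℝ) else 0) * (if τ i = c then 1 else 0) = 0 := by
        intro i
        by_cases h1 : τ i = bb
        · subst h1; simp [hbc]
        · simp [h1]
      simp only [h, Finset.sum_const_zero]
      simp [hDn, Matrix.diagonal, hbc]
  have hDnQ : Dn = (n:ℝ) • Q := by
    rw [hDn, hQ, ← Matrix.diagonal_smul]
    refine congrArg Matrix.diagonal (funext fun c => ?_)
    simp only [Pi.smul_apply, smul_eq_mul, hphat, hnbdef]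
    field_simp
  have hPdP : Pᵀ * Δ * P = Dn * Ab * Dn := by
    ext bb c
    have hL : (Pᵀ * Δ * P) bb c =
        ∑ i ∈ univ.filter (fun i => τ i = bb),
          ∑ j ∈ univ.filter (fun j => τ j = c), Δ i j := by
      rw [Matrix.mul_apply]
      simp only [Matrix.mul_apply, Matrix.transpose_apply, hP, Finset.sum_mul]
      rw [Finset.sum_comm]
      simp only [Finset.sum_filter]
      refine Finset.sum_congr rfl fun i _ => ?_
      by_cases hib : τ i = bb
      · simp only [hib, if_true, one_mul]
        refine Finset.sum_congr rfl fun j _ => ?_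
        by_cases hjc : τ j = c <;> simp [hjc]
      · simp [hib]
    have hRg : (Dn * Ab * Dn) bb c = nb bb * (Ab bb c * nb c) := by
      rw [Matrix.mul_diagonal, Matrix.diagonal_mul, mul_assoc]
    rw [hL, hRg, hAb]
    simp only [blockAvgM, Matrix.of_apply]
    have h1 : nb bb ≠ 0 := (hnb bb).ne'
    have h2 : nb c ≠ 0 := (hnb c).ne'
    simp only [hnbdef] at h1 h2 ⊢
    field_simp
  -- conjugate-transpose facts
  have hQhT : Qhᵀ = Qh := by rw [hQh, Matrix.diagonal_transpose]
  have hYrT : Yrᵀ = Yr := by rw [hYr, Matrix.diagonal_transpose]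
  have hYT : Yᵀ = Y := by rw [hY, Matrix.diagonal_transpose]
  have hQT : Qᵀ = Q := by rw [hQ, Matrix.diagonal_transpose]
  have hWt : Wᵀ = Pᵀ * Y := by rw [hW, Matrix.transpose_mul, hYT]
  have hWtW : Wᵀ * W = Dn := by
    rw [hWt, hW, ← hPtP]
    calc Pᵀ * Y * (Y * P) = Pᵀ * (Y * Y) * P := by
          simp only [Matrix.mul_assoc]
      _ = Pᵀ * P := by rw [hY2, Matrix.mul_one]
  have hYMY : Y * M * Y = W * N * Wᵀ := by
    rw [hM, hW, hWt]
    calc Y * (P * N * Pᵀ) * Y = Y * P * N * (Pᵀ * Y) := by simp only [Matrix.mul_assoc]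
      _ = _ := by simp only [Matrix.mul_assoc]
  -- positive definiteness and inverses
  have hQhNQh_psd : (Qh * N * Qh).PosSemidef := by
    have := hN.mul_mul_conjTranspose_same Qh
    rwa [realCT, hQhT] at this
  have hD_pd : D.PosDef := pdAux hQhNQh_psd (by norm_num) (by positivity)
  have hDdet : IsUnit D.det := hD_pd.det_pos.ne'.isUnit
  have hDDi : D * D⁻¹ = 1 := Matrix.mul_nonsing_inv D hDdet
  have hDiD : D⁻¹ * D = 1 := Matrix.nonsing_inv_mul D hDdet
  have hYMY_psd : (Y * M * Y).PosSemidef := by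
    rw [hYMY]
    have := hN.mul_mul_conjTranspose_same W
    rwa [realCT] at this
  have hCM_pd : CM.PosDef := by
    rw [hCM]
    exact pdAux hYMY_psd (by positivity) (by positivity)
  have hCMdet : IsUnit CM.det := hCM_pd.det_pos.ne'.isUnit
  have hCMinv : CM⁻¹ * CM = 1 := Matrix.nonsing_inv_mul CM hCMdet
  have invAct : ∀ u w : Fin n → ℝ, CM *ᵥ u = w → CM⁻¹ *ᵥ w = u := by
    intro u w h
    rw [← h, Matrix.mulVec_mulVec, hCMinv, Matrix.one_mulVec]
  -- B and its inverse
  have hBfact : B = Qih * D * Qh := by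
    rw [hD, hB]
    rw [Matrix.mul_add, Matrix.add_mul]
    congr 1
    · rw [Matrix.mul_smul, Matrix.smul_mul, Matrix.mul_one, hQihQh]
    · rw [Matrix.mul_smul, Matrix.smul_mul]
      congr 1
      refine Eq.symm ?_
      calc Qih * (Qh * N * Qh) * Qh = (Qih * Qh) * (N * (Qh * Qh)) := by
            simp only [Matrix.mul_assoc]
        _ = N * Q := by rw [hQihQh, hQhQh, Matrix.one_mul]
  have hBBinv : B * Binv = 1 := by
    rw [hBfact, hBinv]
    calc Qih * D * Qh * (Qih * D⁻¹ * Qh)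
        = Qih * (D * ((Qh * Qih) * (D⁻¹ * Qh))) := by simp only [Matrix.mul_assoc]
      _ = Qih * (D * (D⁻¹ * Qh)) := by rw [hQhQih, Matrix.one_mul]
      _ = (Qih * Qh) := by rw [← Matrix.mul_assoc D, hDDi, Matrix.one_mul]
      _ = 1 := hQihQh
  -- calA and R
  have hcalAfact : calA = Yr * D * Yr := by
    rw [hD, hcalA]
    rw [Matrix.mul_add, Matrix.add_mul]
    congr 1
    · rw [Matrix.mul_smul, Matrix.smul_mul, Matrix.mul_one, hYr2]
    · rw [Matrix.mul_smul, Matrix.smul_mul]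
      congr 1
      simp only [Matrix.mul_assoc]
  have hcalAinv : calA⁻¹ = Yr * D⁻¹ * Yr := by
    apply Matrix.inv_eq_right_inv
    rw [hcalAfact]
    calc Yr * D * Yr * (Yr * D⁻¹ * Yr)
        = Yr * (D * ((Yr * Yr) * (D⁻¹ * Yr))) := by simp only [Matrix.mul_assoc]
      _ = Yr * (D * (D⁻¹ * Yr)) := by rw [hYr2, Matrix.one_mul]
      _ = Yr * Yr := by rw [← Matrix.mul_assoc D, hDDi, Matrix.one_mul]
      _ = 1 := hYr2
  have hkey : Q * Binv = Yr * R * Yr := by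
    have hL : Q * Binv = Qh * D⁻¹ * Qh := by
      rw [hBinv]
      calc Q * (Qih * D⁻¹ * Qh) = (Q * Qih) * (D⁻¹ * Qh) := by simp only [Matrix.mul_assoc]
        _ = Qh * D⁻¹ * Qh := by rw [hQQih, Matrix.mul_assoc]
    have hRr : Yr * R * Yr = Qh * D⁻¹ * Qh := by
      rw [hR, hcalAinv]
      calc Yr * (Qh * (Yr * D⁻¹ * Yr) * Qh) * Yr
          = (Yr * Qh) * Yr * D⁻¹ * Yr * (Qh * Yr) := by simp only [Matrix.mul_assoc]
        _ = (Qh * Yr) * Yr * D⁻¹ * Yr * (Yr * Qh) := by rw [hYrQh, ← hYrQh]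
        _ = Qh * ((Yr * Yr) * (D⁻¹ * ((Yr * Yr) * Qh))) := by simp only [Matrix.mul_assoc]
        _ = Qh * D⁻¹ * Qh := by rw [hYr2, Matrix.one_mul, Matrix.one_mul, Matrix.mul_assoc]
    rw [hL, hRr]
  -- vector identities
  set v : Fin r → ℝ := fun c => N a c with hv
  have hmaP : ma = P *ᵥ v := by
    funext i
    rw [hma]
    simp only [Matrix.mulVec, dotProduct, hP, hv, boole_mul]
    simp
  have ham2 : am = (1 / (lam * n)) • (W *ᵥ v) := by
    rw [ham, hmaP, Matrix.mulVec_mulVec, ← hW]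
  have hβY : β = Yr *ᵥ θ := by
    funext c
    rw [hYr, Matrix.mulVec_diagonal, hβ]
  have hb2 : b = (1 / (lam * (n : ℝ) ^ 2)) • ((Y * Δ * P) *ᵥ β) := by
    rw [hb, hβY]
    congr 1
    simp only [Matrix.mulVec_mulVec]
    rw [hYP]
    congr 1
    simp only [Matrix.mul_assoc]
  set x2 : Fin r → ℝ := (Ab * Q) *ᵥ β with hx2
  have hgΔ2 : gΔ = Yr *ᵥ x2 := by
    rw [hgΔ, hx2]
    simp only [Matrix.mulVec_mulVec, Matrix.mul_assoc]
  have hbpar2 : bpar = (1 / (lam * n)) • (W *ᵥ x2) := by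
    rw [hbpar, Matrix.mulVec_smul, hgΔ2, Matrix.mulVec_mulVec, ← hYP, ← hW]
  have hWtb : Wᵀ *ᵥ b = (1 / lam) • ((Q * (Ab * Q)) *ᵥ β) := by
    rw [hb2, Matrix.mulVec_smul, Matrix.mulVec_mulVec]
    have hmat : Wᵀ * (Y * Δ * P) = ((n : ℝ) ^ 2) • (Q * (Ab * Q)) := by
      have h1 : Wᵀ * (Y * Δ * P) = Pᵀ * Δ * P := by
        rw [hWt]
        calc Pᵀ * Y * (Y * Δ * P) = Pᵀ * ((Y * Y) * (Δ * P)) := by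
              simp only [Matrix.mul_assoc]
          _ = Pᵀ * (Δ * P) := by rw [hY2, Matrix.one_mul]
          _ = Pᵀ * Δ * P := by rw [Matrix.mul_assoc]
      rw [h1, hPdP, hDnQ, Matrix.smul_mul, Matrix.smul_mul, Matrix.mul_smul, smul_smul,
        Matrix.mul_assoc]
      congr 1
      ring
    rw [hmat, Matrix.smul_mulVec, smul_smul]
    congr 1
    field_simp
  have hWtbpar : Wᵀ *ᵥ bpar = (1 / lam) • ((Q * (Ab * Q)) *ᵥ β) := by
    rw [hbpar2, Matrix.mulVec_smul, Matrix.mulVec_mulVec, hWtW, hx2, Matrix.mulVec_mulVec,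
      hDnQ, Matrix.smul_mul, Matrix.smul_mulVec, smul_smul]
    congr 1
    field_simp
  have hWtbperp : Wᵀ *ᵥ bperp = 0 := by
    rw [hbperp, Matrix.mulVec_sub, hWtb, hWtbpar, sub_self]
  have hCMbperp : CM *ᵥ bperp = ((4 : ℝ) / n) • bperp := by
    rw [hCM, Matrix.add_mulVec, Matrix.smul_mulVec, Matrix.one_mulVec,
      Matrix.smul_mulVec, hYMY, ← Matrix.mulVec_mulVec, hWtbperp,
      Matrix.mulVec_zero, smul_zero, add_zero]
  have hCMW : CM * W = (1 / (n : ℝ)) • (W * B) := by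
    rw [hCM, hB]
    rw [Matrix.add_mul, Matrix.smul_mul, Matrix.one_mul, Matrix.smul_mul, hYMY]
    rw [Matrix.mul_add, Matrix.mul_smul, Matrix.mul_one, Matrix.mul_smul, smul_add,
      smul_smul, smul_smul]
    congr 1
    · congr 1
      field_simp
    · have h2 : W * N * Wᵀ * W = (n : ℝ) • (W * (N * Q)) := by
        calc W * N * Wᵀ * W = (W * N) * (Wᵀ * W) := by simp only [Matrix.mul_assoc]
          _ = (W * N) * ((n : ℝ) • Q) := by rw [hWtW, hDnQ]
          _ = (n : ℝ) • (W * (N * Q)) := by rw [Matrix.mul_smul, Matrix.mul_assoc]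
      rw [h2, smul_smul]
      congr 1
      field_simp
  -- dot product helpers
  have hWdot : ∀ x z : Fin r → ℝ, (W *ᵥ x) ⬝ᵥ (W *ᵥ z) = (n : ℝ) * (x ⬝ᵥ (Q *ᵥ z)) := by
    intro x z
    rw [Matrix.dotProduct_mulVec, ← Matrix.mulVec_transpose, Matrix.mulVec_mulVec, hWtW, hDnQ,
      Matrix.smul_mulVec, smul_dotProduct, symdot hQT, smul_eq_mul]
  have hWbperp0 : ∀ x : Fin r → ℝ, (W *ᵥ x) ⬝ᵥ bperp = 0 := by
    intro x
    rw [dotProduct_comm, Matrix.dotProduct_mulVec, ← Matrix.mulVec_transpose, hWtbperp,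
      zero_dotProduct]
  -- explicit inverse actions
  set uam : Fin n → ℝ := (1 / lam) • (W *ᵥ (Binv *ᵥ v)) with huam
  have hCMuam : CM *ᵥ uam = am := by
    rw [huam, Matrix.mulVec_smul, Matrix.mulVec_mulVec, hCMW, Matrix.smul_mulVec,
      Matrix.mulVec_mulVec, Matrix.mul_assoc, hBBinv, Matrix.mul_one, smul_smul, ham2]
    congr 1
    field_simp
  set ub : Fin n → ℝ := (1 / lam) • (W *ᵥ (Binv *ᵥ x2)) + ((n : ℝ) / 4) • bperp with hub
  have hb3 : b = bpar + bperp := by rw [hbperp]; abel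
  have hCMub : CM *ᵥ ub = b := by
    rw [hub, Matrix.mulVec_add, Matrix.mulVec_smul, Matrix.mulVec_mulVec, hCMW,
      Matrix.smul_mulVec, Matrix.mulVec_mulVec, Matrix.mul_assoc, hBBinv, Matrix.mul_one,
      smul_smul, Matrix.mulVec_smul, hCMbperp, smul_smul]
    have hsc : (n : ℝ) / 4 * (4 / n) = 1 := by field_simp
    rw [hsc, one_smul, hb3, hbpar2]
    congr 2
    field_simp
  have hiam : CM⁻¹ *ᵥ am = uam := invAct _ _ hCMuam
  have hib : CM⁻¹ *ᵥ b = ub := invAct _ _ hCMub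
  have hform : ∀ x z : Fin r → ℝ,
      (Yr *ᵥ x) ⬝ᵥ (R *ᵥ (Yr *ᵥ z)) = x ⬝ᵥ ((Q * Binv) *ᵥ z) := by
    intro x z
    rw [symdot hYrT, Matrix.mulVec_mulVec, Matrix.mulVec_mulVec, ← hkey]
  have hbb : bperp ⬝ᵥ bperp = ∑ i, (bperp i) ^ 2 := by
    simp [dotProduct, pow_two]
  have hWbperp0' : ∀ x : Fin r → ℝ, bperp ⬝ᵥ (W *ᵥ x) = 0 := fun x => by
    rw [dotProduct_comm]; exact hWbperp0 x
  refine ⟨?_, ?_, ?_⟩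
  · rw [hiam, huam, ham2, smul_dotProduct, dotProduct_smul, hWdot,
      Matrix.mulVec_mulVec, hsa, hform]
    simp only [smul_eq_mul]
    field_simp
  · rw [hib, hub, dotProduct_add, ham2]
    rw [smul_dotProduct, dotProduct_smul, hWdot, Matrix.mulVec_mulVec,
      dotProduct_smul, smul_dotProduct, hWbperp0, hsa, hgΔ2, hform]
    simp only [smul_eq_mul, mul_zero, add_zero]
    field_simp
  · have t11 : bpar ⬝ᵥ ((1 / lam) • (W *ᵥ (Binv *ᵥ x2))) =
        (1 / (lam * n)) * ((1 / lam) * ((n : ℝ) * (x2 ⬝ᵥ ((Q * Binv) *ᵥ x2)))) := by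
      rw [hbpar2, smul_dotProduct, dotProduct_smul, hWdot,
        Matrix.mulVec_mulVec, smul_eq_mul, smul_eq_mul]
    have t12 : bpar ⬝ᵥ (((n : ℝ) / 4) • bperp) = 0 := by
      rw [hbpar2, dotProduct_smul, smul_dotProduct, hWbperp0, smul_zero,
        smul_zero]
    have t21 : bperp ⬝ᵥ ((1 / lam) • (W *ᵥ (Binv *ᵥ x2))) = 0 := by
      rw [dotProduct_smul, hWbperp0', smul_zero]
    have t22 : bperp ⬝ᵥ (((n : ℝ) / 4) • bperp) = ((n : ℝ) / 4) * ∑ i, (bperp i) ^ 2 := by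
      rw [dotProduct_smul, hbb, smul_eq_mul]
    have hsc3 : ∀ t : ℝ, (1 / (lam * n)) * ((1 / lam) * ((n : ℝ) * t)) = (1 / lam ^ 2) * t := by
      intro t; field_simp
    rw [hib, hub, hb3, add_dotProduct, dotProduct_add, dotProduct_add,
      t11, t12, t21, t22, hgΔ2, hform, hsc3]
    ring
end
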